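/- Let K be an infinite field. Fix positive integers e, k and n_1,...,n_k with k ≥ 2, and set m := max{n_1 − 1, n_2, ..., n_k}. Then there exists a nondegenerate finite set S ⊆ Y = P^{n_1} × ... × P^{n_k} with #S = e + 2 + m and e(S) = e. -/

import Mathlib

set_option maxHeartbeats 1000000


open scoped LinearAlgebra.Projectivization
open Projectivization

/-- The multiprojective space `Y = P^{n 0} × ... × P^{n (k-1)}` over `K`,
where `P^m = P(K^{m+1})`. -/
abbrev MultiProj (K : Type*) [Field K] {k : ℕ} (n : Fin k → ℕ) :=
  ∀ i : Fin k, ℙ K (Fin (n i + 1) → K)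

/-- A vector representative of the Segre image `ν(x)` of a point `x ∈ Y`:
the tensor product of representatives of the coordinates. -/
noncomputable def segreVec {K : Type*} [Field K] {k : ℕ} {n : Fin k → ℕ}
    (x : MultiProj K n) : PiTensorProduct K (fun i : Fin k => Fin (n i + 1) → K) :=
  PiTensorProduct.tprod K (fun i => (x i).rep)

/-- `e(S) = #S − 1 − dim⟨ν(S)⟩`, computed as `#S` minus the rank of the linear span
of vector representatives of `ν(S)`. -/
noncomputable def eSet {K : Type*} [Field K] {k : ℕ} {n : Fin k → ℕ}
    (S : Set (MultiProj K n)) : ℕ :=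
  S.ncard - Module.finrank K ↥(Submodule.span K (segreVec '' S))

/-- `S ⊆ Y` is nondegenerate: `π i '' S` spans `P^{n i}` for every `i`. -/
def Nondeg {K : Type*} [Field K] {k : ℕ} {n : Fin k → ℕ}
    (S : Set (MultiProj K n)) : Prop :=
  ∀ i : Fin k, Submodule.span K ((fun x => (x i).rep) '' S) = ⊤

/-- For products of `P^1`'s: `S` is nondegenerate iff each projection has ≥ 2 points. -/
def NondegPts {K : Type*} [Field K] {k : ℕ} {n : Fin k → ℕ}
    (S : Set (MultiProj K n)) : Prop :=
  ∀ i : Fin k, ∃ p ∈ S, ∃ q ∈ S, p i ≠ q i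

/-- `S` is a circuit: linearly dependent, but every proper subset is linearly independent. -/
def IsCircuit {K : Type*} [Field K] {k : ℕ} {n : Fin k → ℕ}
    (S : Set (MultiProj K n)) : Prop :=
  0 < eSet S ∧ ∀ S' : Set (MultiProj K n), S' ⊂ S → eSet S' = 0

/-- `q ∈ P^r` equals `ν(s)` for the point `s ∈ Y`. -/
def IsSegreOf {K : Type*} [Field K] {k : ℕ} {n : Fin k → ℕ}
    (q : ℙ K (PiTensorProduct K (fun i : Fin k => Fin (n i + 1) → K)))
    (s : MultiProj K n) : Prop :=
  ∃ c : K, q.rep = c • segreVec s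

/-- `q ∈ P^r` lies on the Segre variety `ν(Y)`. -/
def InSegre {K : Type*} [Field K] {k : ℕ} {n : Fin k → ℕ}
    (q : ℙ K (PiTensorProduct K (fun i : Fin k => Fin (n i + 1) → K))) : Prop :=
  ∃ y : MultiProj K n, IsSegreOf q y

/-- `S` is minimal: there is no projective line `L ⊆ P^r` contained in the Segre variety
`ν(Y)` meeting `ν(S)` in at least two points. -/
def IsMinimal {K : Type*} [Field K] {k : ℕ} {n : Fin k → ℕ}
    (S : Set (MultiProj K n)) : Prop :=
  ¬ ∃ W : Submodule K (PiTensorProduct K (fun i : Fin k => Fin (n i + 1) → K)),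
      Module.finrank K ↥W = 2 ∧
      (∀ x : ℙ K (PiTensorProduct K (fun i : Fin k => Fin (n i + 1) → K)),
        x.rep ∈ W → InSegre x) ∧
      ∃ x₁ x₂ : ℙ K (PiTensorProduct K (fun i : Fin k => Fin (n i + 1) → K)),
        x₁ ≠ x₂ ∧ x₁.rep ∈ W ∧ x₂.rep ∈ W ∧
        (∃ s₁ ∈ S, IsSegreOf x₁ s₁) ∧ (∃ s₂ ∈ S, IsSegreOf x₂ s₂)

/-- The `X`-rank of a point `q ∈ P^r`: the minimal cardinality of a finite `A ⊆ Y`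
with `q ∈ ⟨ν(A)⟩`. -/
noncomputable def xRank {K : Type*} [Field K] {k : ℕ} {n : Fin k → ℕ}
    (q : ℙ K (PiTensorProduct K (fun i : Fin k => Fin (n i + 1) → K))) : ℕ :=
  sInf {m : ℕ | ∃ A : Set (MultiProj K n), A.Finite ∧ A.ncard = m ∧
    q.rep ∈ Submodule.span K (segreVec '' A)}

section Helpers

variable {K : Type*} [Field K]

lemma mk_ne_of_cross {N : ℕ} {v w : Fin N → K} (hv : v ≠ 0) (hw : w ≠ 0)
    (a b : Fin N) (h : v a * w b ≠ v b * w a) :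
    Projectivization.mk K v hv ≠ Projectivization.mk K w hw := by
  intro heq
  rw [Projectivization.mk_eq_mk_iff] at heq
  obtain ⟨c, hc⟩ := heq
  apply h
  rw [← hc]
  simp only [Pi.smul_apply, Units.smul_def, smul_eq_mul]
  ring

lemma rep_eq_unit_smul {V : Type*} [AddCommGroup V] [Module K V] (v : V) (hv : v ≠ 0) :
    ∃ d : Kˣ, (Projectivization.mk K v hv).rep = (d : K) • v := by
  have h := Projectivization.mk_rep (Projectivization.mk K v hv)
  rw [Projectivization.mk_eq_mk_iff] at h
  obtain ⟨d, hd⟩ := h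
  exact ⟨d, hd.symm⟩

lemma segreVec_mk {k : ℕ} {n : Fin k → ℕ}
    (v : ∀ i : Fin k, Fin (n i + 1) → K) (hv : ∀ i, v i ≠ 0) :
    ∃ d : K, d ≠ 0 ∧
      segreVec (fun i => Projectivization.mk K (v i) (hv i)) =
        d • PiTensorProduct.tprod K v := by
  choose dd hdd using fun i => rep_eq_unit_smul (K := K) (v i) (hv i)
  refine ⟨∏ i, (dd i : K), Finset.prod_ne_zero_iff.mpr (fun i _ => (dd i).ne_zero), ?_⟩
  unfold segreVec
  have h1 : (fun i => (Projectivization.mk K (v i) (hv i)).rep)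
      = fun i => (dd i : K) • v i := funext hdd
  rw [h1]
  exact MultilinearMap.map_smul_univ (PiTensorProduct.tprod K) (fun i => (dd i : K)) v

end Helpers

theorem exists_nondeg_card_e_add_two_add_m
    {K : Type*} [Field K] [Infinite K] {k : ℕ} {n : Fin k → ℕ}
    (hk2 : 2 ≤ k) (hn : ∀ i, 0 < n i) (e : ℕ) (he : 1 ≤ e) :
    ∃ S : Set (MultiProj K n), S.Finite ∧ Nondeg S ∧
      S.ncard = e + 2 +
        Finset.univ.sup (fun i => if i = (⟨0, by omega⟩ : Fin k) then n i - 1 else n i) ∧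
      eSet S = e := by
  classical
  have hk0 : 0 < k := by omega
  set i0 : Fin k := ⟨0, by omega⟩ with hi0def
  set m := Finset.univ.sup (fun i => if i = i0 then n i - 1 else n i) with hmdef
  -- basic facts about m
  have hm1 : n i0 ≤ m + 1 := by
    have h : (if i0 = i0 then n i0 - 1 else n i0) ≤ m :=
      Finset.le_sup (f := fun i => if i = i0 then n i - 1 else n i) (Finset.mem_univ i0)
    rw [if_pos rfl] at h
    have := hn i0
    omega
  have hm2 : ∀ i, i ≠ i0 → n i ≤ m := by
    intro i hi
    have h : (if i = i0 then n i - 1 else n i) ≤ m :=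
      Finset.le_sup (f := fun i => if i = i0 then n i - 1 else n i) (Finset.mem_univ i)
    rwa [if_neg hi] at h
  have hm3 : ∀ j : ℕ, j < m → (j + 2 ≤ n i0) ∨ ∃ i, i ≠ i0 ∧ j + 1 ≤ n i := by
    intro j hj
    obtain ⟨i, -, hi⟩ := Finset.exists_mem_eq_sup Finset.univ ⟨i0, Finset.mem_univ i0⟩
      (fun i => if i = i0 then n i - 1 else n i)
    rw [← hmdef] at hi
    by_cases h : i = i0
    · left; rw [h, if_pos rfl] at hi; omega
    · right; exact ⟨i, h, by rw [if_neg h] at hi; omega⟩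
  have hm4 : 1 ≤ m := by
    obtain ⟨i1, hi1⟩ : ∃ i1 : Fin k, i1 ≠ i0 := ⟨⟨1, by omega⟩, by
      intro h; rw [hi0def] at h; exact absurd (congrArg Fin.val h) (by simp)⟩
    have := hm2 i1 hi1; have := hn i1; omega
  -- nonzero distinct scalars
  have hinf : Infinite ↥({0}ᶜ : Set K) :=
    Set.infinite_coe_iff.mpr ((Set.finite_singleton 0).infinite_compl)
  set τ : ℕ → K := fun a => ((Infinite.natEmbedding ↥({0}ᶜ : Set K)) a : K) with hτdef
  have τinj : Function.Injective τ := fun a b h =>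
    (Infinite.natEmbedding ↥({0}ᶜ : Set K)).injective (Subtype.ext h)
  have τne : ∀ a, τ a ≠ 0 := by
    intro a h
    exact ((Infinite.natEmbedding ↥({0}ᶜ : Set K)) a).2 (by simpa using h)
  -- index 1 in each factor
  have h1lt : ∀ i : Fin k, (1 : ℕ) < n i + 1 := fun i => by have := hn i; omega
  -- the multiindices
  set c : ℕ → ∀ i : Fin k, Fin (n i + 1) := fun j i =>
    if j = 0 then 0
    else if j = 1 then (if i = i0 then ⟨1, h1lt i⟩ else 0)
    else if i = i0 then (if h : j ≤ n i then ⟨j, by omega⟩ else 0)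
    else (if h : j - 1 ≤ n i then ⟨j - 1, by omega⟩ else 0) with hcdef
  have hcval : ∀ j i, ((c j i : ℕ)) =
      if j = 0 then 0
      else if j = 1 then (if i = i0 then 1 else 0)
      else if i = i0 then (if j ≤ n i then j else 0)
      else (if j - 1 ≤ n i then j - 1 else 0) := by
    intro j i
    simp only [hcdef]
    split_ifs <;> rfl
  have hc0 : ∀ i, c 0 i = 0 := fun i => by simp [hcdef]
  -- key distinctness
  have key : ∀ j j' : ℕ, j < j' → j' ≤ m + 1 → c j ≠ c j' := by
    intro j j' hjj' hj' heq
    rcases Nat.lt_or_ge j' 2 with h2 | h2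
    · have hv := congrArg Fin.val (congrFun heq i0)
      rw [hcval, hcval] at hv
      split_ifs at hv <;> omega
    · rcases hm3 (j' - 2) (by omega) with h | ⟨i, hi, hni⟩
      · have hv := congrArg Fin.val (congrFun heq i0)
        rw [hcval, hcval] at hv
        split_ifs at hv <;> omega
      · have hv := congrArg Fin.val (congrFun heq i)
        rw [hcval, hcval] at hv
        split_ifs at hv <;> omega
  have hczero : c (m + 2) = c 0 := by
    funext i
    apply Fin.ext
    rw [hcval, hcval]
    by_cases hi : i = i0
    · have : n i ≤ m + 1 := hi ▸ hm1
      split_ifs <;> omega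
    · have : n i ≤ m := hm2 i hi
      split_ifs <;> omega
  -- the vectors
  set w : ℕ → ∀ i : Fin k, (Fin (n i + 1) → K) := fun a i =>
    (Pi.single 0 1 : Fin (n i + 1) → K)
      + (if i = i0 then τ a else 0) • (Pi.single ⟨1, h1lt i⟩ 1 : Fin (n i + 1) → K) with hwdef
  have h01 : ∀ i : Fin k, (0 : Fin (n i + 1)) ≠ ⟨1, h1lt i⟩ := by
    intro i h
    exact absurd (congrArg Fin.val h) (by simp)
  have hw0 : ∀ a i, w a i 0 = 1 := by
    intro a i
    by_cases hi : i = i0 <;>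
      simp [hwdef, hi, Pi.single_apply, h01 i]
  have hw1 : ∀ a, w a i0 ⟨1, h1lt i0⟩ = τ a := by
    intro a
    rw [hwdef]
    simp [Pi.single_apply, Ne.symm (h01 i0)]
  have hwother : ∀ (a : ℕ) i, i ≠ i0 → w a i = Pi.single 0 1 := by
    intro a i hi
    rw [hwdef]
    simp [if_neg hi]
  have hwne : ∀ a i, w a i ≠ 0 := by
    intro a i h
    have := congrFun h (0 : Fin (n i + 1))
    rw [hw0] at this
    simp at this
  have hsne : ∀ (i : Fin k) (r : Fin (n i + 1)),
      (Pi.single r 1 : Fin (n i + 1) → K) ≠ 0 := by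
    intro i r h
    have := congrFun h r
    simp at this
  -- the points
  set P : (Fin (e + 1) ⊕ Fin (m + 1)) → MultiProj K n := Sum.elim
    (fun a i => Projectivization.mk K (w (a : ℕ) i) (hwne _ i))
    (fun p i => Projectivization.mk K (Pi.single (c ((p : ℕ) + 2) i) 1) (hsne i _))
    with hPdef
  -- values of c at indices p+2
  have hcp2 : ∀ p : ℕ, p + 2 ≤ m + 1 → ∃ i : Fin k, ((c (p + 2) i : ℕ)) ≠ 0 := by
    intro p hp
    have h := key 0 (p + 2) (by omega) hp
    by_contra hall
    push_neg at hall
    apply h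
    funext i
    apply Fin.ext
    rw [hc0]
    simpa using (hall i).symm
  have hci0 : ∀ p : ℕ, ((c (p + 2) i0 : ℕ)) = 0 ∨ ((c (p + 2) i0 : ℕ)) = p + 2 := by
    intro p
    rw [hcval]
    split_ifs <;> omega
  -- injectivity of P
  have Pinj : Function.Injective P := by
    rintro (a | p) (a' | p') h
    · congr 1
      by_contra hne
      have h0 := congrFun h i0
      rw [hPdef] at h0
      simp only [Sum.elim_inl] at h0
      refine mk_ne_of_cross (hwne _ i0) (hwne _ i0) 0 ⟨1, h1lt i0⟩ ?_ h0
      rw [hw0, hw0, hw1, hw1]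
      intro hh
      simp only [one_mul, mul_one] at hh
      exact hne (Fin.ext (τinj hh)).symm
    · exfalso
      have h0 := congrFun h i0
      rw [hPdef] at h0
      simp only [Sum.elim_inl, Sum.elim_inr] at h0
      rcases eq_or_ne (c ((p' : ℕ) + 2) i0) 0 with hx | hx
      · refine mk_ne_of_cross (hwne _ i0) (hsne i0 _) ⟨1, h1lt i0⟩ 0 ?_ h0
        rw [hw1, hw0, hx]
        simp [Pi.single_apply, Ne.symm (h01 i0), τne]
      · refine mk_ne_of_cross (hwne _ i0) (hsne i0 _) 0 (c ((p' : ℕ) + 2) i0) ?_ h0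
        rw [hw0]
        simp [Pi.single_apply, Ne.symm hx]
    · exfalso
      have h0 := congrFun h.symm i0
      rw [hPdef] at h0
      simp only [Sum.elim_inl, Sum.elim_inr] at h0
      rcases eq_or_ne (c ((p : ℕ) + 2) i0) 0 with hx | hx
      · refine mk_ne_of_cross (hwne _ i0) (hsne i0 _) ⟨1, h1lt i0⟩ 0 ?_ h0
        rw [hw1, hw0, hx]
        simp [Pi.single_apply, Ne.symm (h01 i0), τne]
      · refine mk_ne_of_cross (hwne _ i0) (hsne i0 _) 0 (c ((p : ℕ) + 2) i0) ?_ h0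
        rw [hw0]
        simp [Pi.single_apply, Ne.symm hx]
    · congr 1
      by_contra hne
      -- WLOG p < p'
      have hne' : (p : ℕ) ≠ (p' : ℕ) := fun hh => hne (Fin.ext hh)
      have hcc : c ((p : ℕ) + 2) ≠ c ((p' : ℕ) + 2) := by
        have hp := p.isLt
        have hp' := p'.isLt
        rcases Nat.lt_or_ge (p : ℕ) (p' : ℕ) with hlt | hge
        · rcases Nat.lt_or_ge (p' : ℕ) m with h' | h'
          · exact key _ _ (by omega) (by omega)
          · have hp'm : (p' : ℕ) = m := by omega
            rw [hp'm, hczero]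
            intro hh
            exact key 0 ((p : ℕ) + 2) (by omega) (by omega) hh.symm
        · have hlt : (p' : ℕ) < (p : ℕ) := by omega
          rcases Nat.lt_or_ge (p : ℕ) m with h' | h'
          · exact fun hh => key _ _ (by omega) (by omega) hh.symm
          · have hpm : (p : ℕ) = m := by omega
            rw [hpm, hczero]
            exact fun hh => key 0 ((p' : ℕ) + 2) (by omega) (by omega) hh
      obtain ⟨i, hi⟩ : ∃ i, c ((p : ℕ) + 2) i ≠ c ((p' : ℕ) + 2) i := by
        by_contra hall
        push_neg at hall
        exact hcc (funext hall)
      have h0 := congrFun h i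
      rw [hPdef] at h0
      simp only [Sum.elim_inr] at h0
      refine mk_ne_of_cross (hsne i _) (hsne i _) (c ((p : ℕ) + 2) i) (c ((p' : ℕ) + 2) i) ?_ h0
      rw [Pi.single_eq_same, Pi.single_eq_same, Pi.single_eq_of_ne hi,
        Pi.single_eq_of_ne (Ne.symm hi)]
      simp
  -- the set
  refine ⟨Set.range P, Set.finite_range P, ?_, ?_, ?_⟩
  · -- Nondeg
    intro i
    rw [eq_top_iff]
    set V := Submodule.span K ((fun x => (x i).rep) '' Set.range P) with hVdef
    have hmemP : ∀ s : Fin (e + 1) ⊕ Fin (m + 1), (P s i).rep ∈ V :=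
      fun s => Submodule.subset_span ⟨P s, ⟨s, rfl⟩, rfl⟩
    have hmemW : ∀ a : ℕ, a ≤ e → w a i ∈ V := by
      intro a ha
      obtain ⟨d, hd⟩ := rep_eq_unit_smul (K := K) (w a i) (hwne a i)
      have h3 : ((d : K)⁻¹ • (d : K) • w a i) ∈ V := by
        apply Submodule.smul_mem
        rw [← hd]
        exact hmemP (Sum.inl ⟨a, by omega⟩)
      rwa [smul_smul, inv_mul_cancel₀ (Units.ne_zero d), one_smul] at h3
    have hmemB : ∀ p : ℕ, p ≤ m →
        (Pi.single (c (p + 2) i) 1 : Fin (n i + 1) → K) ∈ V := by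
      intro p hp
      obtain ⟨d, hd⟩ := rep_eq_unit_smul (K := K)
        (Pi.single (c (p + 2) i) 1 : Fin (n i + 1) → K) (hsne i _)
      have h3 : ((d : K)⁻¹ • (d : K) • (Pi.single (c (p + 2) i) 1 : Fin (n i + 1) → K)) ∈ V := by
        apply Submodule.smul_mem
        rw [← hd]
        exact hmemP (Sum.inr ⟨p, by omega⟩)
      rwa [smul_smul, inv_mul_cancel₀ (Units.ne_zero d), one_smul] at h3
    have hsingle : ∀ r : Fin (n i + 1), (Pi.single r 1 : Fin (n i + 1) → K) ∈ V := by
      intro r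
      by_cases hi : i = i0
      · subst hi
        rcases Nat.lt_or_ge (r : ℕ) 2 with hr2 | hr2
        · rcases Nat.lt_or_ge (r : ℕ) 1 with hr1 | hr1
          · have hr : r = c (m + 2) i0 := by
              apply Fin.ext
              rw [hczero, hc0]
              simp only [Fin.val_zero]
              omega
            rw [hr]
            exact hmemB m le_rfl
          · have hr : r = ⟨1, h1lt i0⟩ := Fin.ext (by simp; omega)
            have h10 : τ 1 - τ 0 ≠ 0 := sub_ne_zero_of_ne fun hh => by simpa using τinj hh
            have ha1 : w 1 i0 ∈ V := hmemW 1 (by omega)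
            have ha0 : w 0 i0 ∈ V := hmemW 0 (by omega)
            have hsub : w 1 i0 - w 0 i0
                = (τ 1 - τ 0) • (Pi.single ⟨1, h1lt i0⟩ 1 : Fin (n i0 + 1) → K) := by
              simp only [hwdef, eq_self_iff_true, if_true]
              module
            have hv' := Submodule.smul_mem V (τ 1 - τ 0)⁻¹ (Submodule.sub_mem V ha1 ha0)
            rw [hsub, smul_smul, inv_mul_cancel₀ h10, one_smul] at hv'
            rwa [hr]
        · have hrn : (r : ℕ) ≤ n i0 := by have := r.isLt; omega
          have := hmemB ((r : ℕ) - 2) (by omega)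
          have hr : c (((r : ℕ) - 2) + 2) i0 = r := by
            apply Fin.ext
            rw [hcval, if_neg (by omega), if_neg (by omega), if_pos rfl,
              if_pos (by omega)]
            omega
          rwa [hr] at this
      · rcases Nat.lt_or_ge (r : ℕ) 1 with hr1 | hr1
        · have hr : r = c (m + 2) i := by
            apply Fin.ext
            rw [hczero, hc0]
            simp only [Fin.val_zero]
            omega
          rw [hr]
          exact hmemB m le_rfl
        · have hrn : (r : ℕ) ≤ n i := by have := r.isLt; omega
          have hin : n i ≤ m := hm2 i hi
          have := hmemB ((r : ℕ) - 1) (by omega)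
          have hr : c (((r : ℕ) - 1) + 2) i = r := by
            apply Fin.ext
            rw [hcval, if_neg (by omega), if_neg (by omega), if_neg hi,
              if_pos (by omega)]
            omega
          rwa [hr] at this
    intro v _
    have hrepr : v = ∑ r : Fin (n i + 1), v r • (Pi.single r 1 : Fin (n i + 1) → K) := by
      conv_lhs => rw [← Finset.univ_sum_single v]
      refine Finset.sum_congr rfl fun r _ => ?_
      rw [← Pi.single_smul, smul_eq_mul, mul_one]
    rw [hrepr]
    exact Submodule.sum_mem _ fun r _ => Submodule.smul_mem _ _ (hsingle r)
  · -- cardinality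
    have h1 : (Set.range P).ncard = Nat.card (Fin (e + 1) ⊕ Fin (m + 1)) := by
      rw [← Nat.card_coe_set_eq, Nat.card_range_of_injective Pinj]
    rw [h1]
    simp [Nat.card_eq_fintype_card]
    omega
  · -- eSet
    have hcard : (Set.range P).ncard = e + 2 + m := by
      rw [← Nat.card_coe_set_eq, Nat.card_range_of_injective Pinj]
      simp [Nat.card_eq_fintype_card]
      omega
    set GN : ℕ → PiTensorProduct K (fun i : Fin k => Fin (n i + 1) → K) :=
      fun j => PiTensorProduct.tprod K
        (fun i => (Pi.single (c j i) 1 : Fin (n i + 1) → K)) with hGNdef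
    have hexp : ∀ a : ℕ,
        PiTensorProduct.tprod K (fun i => w a i) = GN 0 + τ a • GN 1 := by
      intro a
      have hbase0 : (fun i => w a i)
          = Function.update (fun i => (Pi.single 0 1 : Fin (n i + 1) → K)) i0
            ((Pi.single 0 1 : Fin (n i0 + 1) → K)
              + τ a • (Pi.single ⟨1, h1lt i0⟩ 1 : Fin (n i0 + 1) → K)) := by
        funext i
        by_cases hi : i = i0
        · subst hi
          rw [Function.update_self]
          simp [hwdef]
        · rw [Function.update_of_ne hi]
          exact hwother a i hi
      rw [hbase0, (PiTensorProduct.tprod K).map_update_add, (PiTensorProduct.tprod K).map_update_smul]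
      have h0' : Function.update (fun i => (Pi.single 0 1 : Fin (n i + 1) → K)) i0
          (Pi.single 0 1 : Fin (n i0 + 1) → K)
          = fun i => (Pi.single (c 0 i) 1 : Fin (n i + 1) → K) := by
        funext i
        by_cases hi : i = i0
        · subst hi
          rw [Function.update_self, hc0]
        · rw [Function.update_of_ne hi, hc0]
      have h1' : Function.update (fun i => (Pi.single 0 1 : Fin (n i + 1) → K)) i0
          (Pi.single ⟨1, h1lt i0⟩ 1 : Fin (n i0 + 1) → K)
          = fun i => (Pi.single (c 1 i) 1 : Fin (n i + 1) → K) := by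
        funext i
        by_cases hi : i = i0
        · subst hi
          rw [Function.update_self]
          have hcc : c 1 i0 = ⟨1, h1lt i0⟩ := by
            apply Fin.ext
            rw [hcval, if_neg (by omega), if_pos rfl, if_pos rfl]
          rw [hcc]
        · rw [Function.update_of_ne hi]
          have hcc : c 1 i = 0 := by
            apply Fin.ext
            rw [hcval, if_neg (by omega), if_pos rfl, if_neg hi]
            simp
          rw [hcc]
      rw [h0', h1']
    set SS := Submodule.span K (segreVec '' Set.range P) with hSSdef
    have hsegA : ∀ a : Fin (e + 1), ∃ d : K, d ≠ 0 ∧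
        segreVec (P (Sum.inl a)) = d • PiTensorProduct.tprod K (fun i => w (a : ℕ) i) :=
      fun a => segreVec_mk (fun i => w (a : ℕ) i) (fun i => hwne _ i)
    have hsegB : ∀ p : Fin (m + 1), ∃ d : K, d ≠ 0 ∧
        segreVec (P (Sum.inr p)) = d • PiTensorProduct.tprod K
          (fun i => (Pi.single (c ((p : ℕ) + 2) i) 1 : Fin (n i + 1) → K)) :=
      fun p => segreVec_mk _ (fun i => hsne i _)
    have hAmem : ∀ a : Fin (e + 1),
        PiTensorProduct.tprod K (fun i => w (a : ℕ) i) ∈ SS := by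
      intro a
      obtain ⟨d, hd0, hd⟩ := hsegA a
      have h1 : segreVec (P (Sum.inl a)) ∈ SS :=
        Submodule.subset_span ⟨P (Sum.inl a), ⟨Sum.inl a, rfl⟩, rfl⟩
      have h2 := Submodule.smul_mem SS d⁻¹ h1
      rwa [hd, smul_smul, inv_mul_cancel₀ hd0, one_smul] at h2
    have hBmem : ∀ p : Fin (m + 1), PiTensorProduct.tprod K
        (fun i => (Pi.single (c ((p : ℕ) + 2) i) 1 : Fin (n i + 1) → K)) ∈ SS := by
      intro p
      obtain ⟨d, hd0, hd⟩ := hsegB p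
      have h1 : segreVec (P (Sum.inr p)) ∈ SS :=
        Submodule.subset_span ⟨P (Sum.inr p), ⟨Sum.inr p, rfl⟩, rfl⟩
      have h2 := Submodule.smul_mem SS d⁻¹ h1
      rwa [hd, smul_smul, inv_mul_cancel₀ hd0, one_smul] at h2
    have hspan : SS = Submodule.span K (Set.range (fun j : Fin (m + 2) => GN (j : ℕ))) := by
      apply le_antisymm
      · rw [hSSdef, Submodule.span_le]
        rintro x ⟨y, ⟨s, rfl⟩, rfl⟩
        match s with
        | Sum.inl a =>
          obtain ⟨d, hd0, hd⟩ := hsegA a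
          rw [hd]
          refine Submodule.smul_mem _ _ ?_
          rw [hexp (a : ℕ)]
          refine Submodule.add_mem _ ?_ ?_
          · exact Submodule.subset_span ⟨⟨0, by omega⟩, rfl⟩
          · exact Submodule.smul_mem _ _ (Submodule.subset_span ⟨⟨1, by omega⟩, rfl⟩)
        | Sum.inr p =>
          obtain ⟨d, hd0, hd⟩ := hsegB p
          rw [hd]
          refine Submodule.smul_mem _ _ ?_
          rcases Nat.lt_or_ge (p : ℕ) m with hp | hp
          · exact Submodule.subset_span ⟨⟨(p : ℕ) + 2, by omega⟩, rfl⟩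
          · have hpm : (p : ℕ) = m := by have := p.isLt; omega
            have h' : (fun i => (Pi.single (c ((p : ℕ) + 2) i) 1 : Fin (n i + 1) → K))
                = fun i => (Pi.single (c 0 i) 1 : Fin (n i + 1) → K) := by
              funext i
              rw [hpm, hczero]
            rw [h']
            exact Submodule.subset_span ⟨⟨0, by omega⟩, rfl⟩
      · rw [Submodule.span_le]
        rintro x ⟨j, rfl⟩
        show GN (j : ℕ) ∈ SS
        have hjlt := j.isLt
        rcases Nat.lt_or_ge (j : ℕ) 2 with hj2 | hj2
        · rcases Nat.lt_or_ge (j : ℕ) 1 with hj1 | hj1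
          · have hj0 : (j : ℕ) = 0 := by omega
            have h : PiTensorProduct.tprod K
                (fun i => (Pi.single (c (m + 2) i) 1 : Fin (n i + 1) → K)) ∈ SS :=
              hBmem ⟨m, by omega⟩
            have h' : (fun i => (Pi.single (c (m + 2) i) 1 : Fin (n i + 1) → K))
                = fun i => (Pi.single (c 0 i) 1 : Fin (n i + 1) → K) := by
              funext i
              rw [hczero]
            rw [h'] at h
            rw [hj0]
            exact h
          · have hj1' : (j : ℕ) = 1 := by omega
            rw [hj1']
            have h10 : τ 1 - τ 0 ≠ 0 := sub_ne_zero_of_ne fun hh => by simpa using τinj hh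
            have ha1 : PiTensorProduct.tprod K (fun i => w 1 i) ∈ SS := hAmem ⟨1, by omega⟩
            have ha0 : PiTensorProduct.tprod K (fun i => w 0 i) ∈ SS := hAmem ⟨0, by omega⟩
            have h2 := Submodule.smul_mem SS (τ 1 - τ 0)⁻¹ (Submodule.sub_mem SS ha1 ha0)
            rw [hexp 1, hexp 0] at h2
            have h3 : (GN 0 + τ 1 • GN 1) - (GN 0 + τ 0 • GN 1) = (τ 1 - τ 0) • GN 1 := by
              module
            rw [h3, smul_smul, inv_mul_cancel₀ h10, one_smul] at h2
            exact h2
        · have h : PiTensorProduct.tprod K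
              (fun i => (Pi.single (c (((j : ℕ) - 2) + 2) i) 1 : Fin (n i + 1) → K)) ∈ SS :=
            hBmem ⟨(j : ℕ) - 2, by omega⟩
          have hj' : ((j : ℕ) - 2) + 2 = (j : ℕ) := by omega
          rw [hj'] at h
          exact h
    -- linear independence
    set φ : (∀ i : Fin k, Fin (n i + 1)) →
        (PiTensorProduct K (fun i : Fin k => Fin (n i + 1) → K) →ₗ[K] K) :=
      fun idx => PiTensorProduct.lift
        ((MultilinearMap.mkPiAlgebra K (Fin k) K).compLinearMap
          (fun i => LinearMap.proj (idx i))) with hφdef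
    have hφ : ∀ (idx : ∀ i : Fin k, Fin (n i + 1)) (v : ∀ i : Fin k, Fin (n i + 1) → K),
        φ idx (PiTensorProduct.tprod K v) = ∏ i, v i (idx i) := by
      intro idx v
      rw [hφdef]
      simp only [PiTensorProduct.lift.tprod, MultilinearMap.compLinearMap_apply,
        MultilinearMap.mkPiAlgebra_apply, LinearMap.proj_apply]
    have hcne : ∀ j j' : ℕ, j ≤ m + 1 → j' ≤ m + 1 → j ≠ j' → c j ≠ c j' := by
      intro j j' hj hj' hne
      rcases Nat.lt_or_ge j j' with h | h
      · exact key j j' h hj'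
      · exact fun hh => key j' j (by omega) hj hh.symm
    have hdelta : ∀ j j' : Fin (m + 2),
        φ (c (j : ℕ)) (GN (j' : ℕ)) = if j = j' then 1 else 0 := by
      intro j j'
      have hjlt := j.isLt
      have hj'lt := j'.isLt
      have h1 : φ (c (j : ℕ)) (GN (j' : ℕ))
          = ∏ i, (Pi.single (c (j' : ℕ) i) 1 : Fin (n i + 1) → K) (c (j : ℕ) i) :=
        hφ (c (j : ℕ)) _
      rw [h1]
      by_cases h : j = j'
      · subst h
        rw [if_pos rfl]
        apply Finset.prod_eq_one
        intro i _
        exact Pi.single_eq_same _ _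
      · rw [if_neg h]
        have hcc : c (j : ℕ) ≠ c (j' : ℕ) :=
          hcne _ _ (by omega) (by omega) (fun hh => h (Fin.ext hh))
        obtain ⟨i, hi⟩ : ∃ i, c (j : ℕ) i ≠ c (j' : ℕ) i := by
          by_contra hall
          push_neg at hall
          exact hcc (funext hall)
        exact Finset.prod_eq_zero (Finset.mem_univ i) (Pi.single_eq_of_ne hi 1)
    have hGindep : LinearIndependent K (fun j : Fin (m + 2) => GN (j : ℕ)) := by
      rw [Fintype.linearIndependent_iff]
      intro g hg j
      have h2 := congrArg (φ (c (j : ℕ))) hg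
      rw [map_sum, map_zero] at h2
      simp only [map_smul, hdelta, smul_eq_mul, mul_ite, mul_one, mul_zero] at h2
      rw [Finset.sum_ite_eq] at h2
      simpa using h2
    have hrank : Module.finrank K ↥SS = m + 2 := by
      rw [hspan, finrank_span_eq_card hGindep]
      simp
    show (Set.range P).ncard - Module.finrank K ↥SS = e
    rw [hcard, hrank]
    omega
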